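/- Let q be an odd prime power, d an even natural number with d dividing q-1 and (q-1)/d odd. Let h be a polynomial over F_q, T(x) = x^((q-1)/d), and f(x) = x^2 · h(T(x)). If f is a permutation of F_q, then for every nonzero a in F_q and every c in F_q, the equation f(x+a) - f(x) = c has at most 2d^2 - (3/2)d solutions x in F_q. -/

import Mathlib

open Finset Polynomial

/-- At most 2 elements of a finset can satisfy a nontrivial equation of degree ≤ 2. -/
lemma wl_quad_card {F : Type*} [Field F] [DecidableEq F] (u v w : F)
    (huv : u ≠ 0 ∨ v ≠ 0) (s : Finset F)
    (hs : ∀ x ∈ s, u * x ^ 2 + v * x + w = 0) : s.card ≤ 2 := by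
  by_contra hc
  push_neg at hc
  obtain ⟨x, y, z, hx, hy, hz, hxy, hxz, hyz⟩ := Finset.two_lt_card_iff.mp hc
  have ex := hs x hx
  have ey := hs y hy
  have ez := hs z hz
  have h1 : (x - y) * (u * (x + y) + v) = 0 := by linear_combination ex - ey
  have h2 : (x - z) * (u * (x + z) + v) = 0 := by linear_combination ex - ez
  have h1' : u * (x + y) + v = 0 := by
    rcases mul_eq_zero.mp h1 with h | h
    · exact absurd (sub_eq_zero.mp h) hxy
    · exact h
  have h2' : u * (x + z) + v = 0 := by
    rcases mul_eq_zero.mp h2 with h | h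
    · exact absurd (sub_eq_zero.mp h) hxz
    · exact h
  have hu : u = 0 := by
    have h3 : u * (y - z) = 0 := by linear_combination h1' - h2'
    rcases mul_eq_zero.mp h3 with h | h
    · exact h
    · exact absurd (sub_eq_zero.mp h) hyz
  have hv : v = 0 := by rw [hu] at h1'; simpa using h1'
  rcases huv with h | h
  · exact h hu
  · exact h hv

/-- The key algebraic identities extracted from having two valid "anti-diagonal"
solutions in each of the two directions. -/
lemma wl_anti22 {F : Type*} [Field F] (s : ℕ) (hsodd : Odd s) (h2F : (2:F) ≠ 0)
    (a c α b₁ b₂ : F) (ha : a ≠ 0) (hα : α ≠ 0) (hb2 : b₂ ≠ 0)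
    (x₁ x₂ y₁ y₂ : F) (hx12 : x₁ ≠ x₂) (hy12 : y₁ ≠ y₂)
    (hx1s : x₁ ^ s = α) (hx2s : x₂ ^ s = α)
    (hx1as : (x₁ + a) ^ s = -α) (hx2as : (x₂ + a) ^ s = -α)
    (hy1s : y₁ ^ s = -α) (hy2s : y₂ ^ s = -α)
    (hy1as : (y₁ + a) ^ s = α) (hy2as : (y₂ + a) ^ s = α)
    (e1 : b₂ * (x₁ + a) ^ 2 - b₁ * x₁ ^ 2 = c)
    (e2 : b₂ * (x₂ + a) ^ 2 - b₁ * x₂ ^ 2 = c)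
    (e3 : b₁ * (y₁ + a) ^ 2 - b₂ * y₁ ^ 2 = c)
    (e4 : b₁ * (y₂ + a) ^ 2 - b₂ * y₂ ^ 2 = c) :
    (a ^ 2 * b₂ - c) ^ s = (b₂ - b₁) ^ s * α ^ 2 ∧
    (a ^ 2 * b₂ + c) ^ s = (b₂ - b₁) ^ s * α ^ 2 ∧
    (a ^ 2 * b₁ + c) ^ s = -((b₂ - b₁) ^ s * α ^ 2) ∧
    (a ^ 2 * b₁ - c) ^ s = -((b₂ - b₁) ^ s * α ^ 2) ∧
    (b₂ - b₁) ^ s * α ^ 2 ≠ 0 := by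
  set B := b₂ - b₁ with hB_def
  have hstep : (x₁ - x₂) * (B * (x₁ + x₂) + 2 * a * b₂) = 0 := by
    rw [hB_def]; linear_combination e1 - e2
  have hsum : B * (x₁ + x₂) = -(2 * a * b₂) := by
    rcases mul_eq_zero.mp hstep with hh | hh
    · exact absurd (sub_eq_zero.mp hh) hx12
    · linear_combination hh
  have hB : B ≠ 0 := by
    intro hB0
    rw [hB0, zero_mul] at hsum
    have h2a : (2 : F) * a * b₂ ≠ 0 := mul_ne_zero (mul_ne_zero h2F ha) hb2
    exact h2a (by linear_combination hsum)
  have hprod : B * (x₁ * x₂) = a ^ 2 * b₂ - c := by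
    rw [hB_def] at hsum ⊢; linear_combination x₁ * hsum - e1
  have hstep' : (y₁ - y₂) * (B * (y₁ + y₂) - 2 * a * b₁) = 0 := by
    rw [hB_def]; linear_combination e4 - e3
  have hsum' : B * (y₁ + y₂) = 2 * a * b₁ := by
    rcases mul_eq_zero.mp hstep' with hh | hh
    · exact absurd (sub_eq_zero.mp hh) hy12
    · linear_combination hh
  have hprod' : B * (y₁ * y₂) = c - a ^ 2 * b₁ := by
    rw [hB_def] at hsum' ⊢; linear_combination e3 + y₁ * hsum'
  set K := B ^ s * α ^ 2 with hK_def
  have hKne : K ≠ 0 := mul_ne_zero (pow_ne_zero _ hB) (pow_ne_zero _ hα)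
  have k1 : (a ^ 2 * b₂ - c) ^ s = K := by
    rw [← hprod, mul_pow, mul_pow, hx1s, hx2s, hK_def, sq]
  have h2 : B * ((x₁ + a) * (x₂ + a)) = -(a ^ 2 * b₁ + c) := by
    rw [hB_def] at hsum hprod ⊢; linear_combination hprod + a * hsum
  have k3 : (a ^ 2 * b₁ + c) ^ s = -K := by
    have := congrArg (· ^ s) h2
    simp only [mul_pow] at this
    rw [hx1as, hx2as, hsodd.neg_pow (a ^ 2 * b₁ + c)] at this
    rw [hK_def]
    linear_combination this
  have k4 : (a ^ 2 * b₁ - c) ^ s = -K := by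
    have hc : (c - a ^ 2 * b₁) ^ s = K := by
      rw [← hprod', mul_pow, mul_pow, hy1s, hy2s, hK_def]; ring
    have : (a ^ 2 * b₁ - c) = -(c - a ^ 2 * b₁) := by ring
    rw [this, hsodd.neg_pow, hc]
  have h4 : B * ((y₁ + a) * (y₂ + a)) = a ^ 2 * b₂ + c := by
    rw [hB_def] at hsum' hprod' ⊢; linear_combination hprod' + a * hsum'
  have k2 : (a ^ 2 * b₂ + c) ^ s = K := by
    have := congrArg (· ^ s) h4
    simp only [mul_pow] at this
    rw [hy1as, hy2as] at this
    rw [hK_def]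
    linear_combination -this
  exact ⟨k1, k2, k3, k4, hKne⟩

theorem wan_lidl_s2_d_even_du_bound
    (F : Type*) [Field F] [Fintype F] [DecidableEq F]
    (q d : ℕ) (hq : Fintype.card F = q) (hqodd : Odd q)
    (hd : d ∣ q - 1) (hdeven : Even d) (hodd : Odd ((q - 1) / d))
    (h : Polynomial F) (f : F → F)
    (hf : ∀ x : F, f x = x ^ 2 * h.eval (x ^ ((q - 1) / d)))
    (hperm : Function.Bijective f)
    (a : F) (ha : a ≠ 0) (c : F) :
    (Finset.univ.filter (fun x : F => f (x + a) - f x = c)).card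
      ≤ 2 * d ^ 2 - (3 * d) / 2 := by
  classical
  set s : ℕ := (q - 1) / d with hs_def
  set S : Finset F := Finset.univ.filter (fun x : F => f (x + a) - f x = c) with hS_def
  have hq2 : 2 ≤ q := by rw [← hq]; exact Fintype.one_lt_card
  have hd0 : d ≠ 0 := by
    rintro rfl
    rw [hs_def] at hodd
    simp [Nat.div_zero] at hodd
  have hds : d * s = q - 1 := Nat.mul_div_cancel' hd
  have hsodd : Odd s := hodd
  have hs0 : s ≠ 0 := by rintro hh; rw [hh] at hsodd; simp at hsodd
  have h2F : (2 : F) ≠ 0 := by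
    have hrc : ringChar F ≠ 2 := by
      intro hc
      have h1 := FiniteField.even_card_of_char_two (F := F) hc
      rw [hq] at h1
      rcases hqodd with ⟨k, hk⟩
      omega
    exact Ring.two_ne_zero hrc
  have hq1pos : 0 < q - 1 := by
    rcases Nat.eq_zero_or_pos (q - 1) with h0 | h0
    · exfalso; apply hd0; omega
    · exact h0
  have hdpos : 0 < d := Nat.pos_of_ne_zero hd0
  -- primitive root and d-th roots of unity
  obtain ⟨g, hg⟩ := IsCyclic.exists_generator (α := Fˣ)
  have hgord : orderOf g = q - 1 := by
    rw [orderOf_eq_card_of_forall_mem_zpowers hg, Nat.card_eq_fintype_card,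
      Fintype.card_units, hq]
  have hgprim : IsPrimitiveRoot g (q - 1) := hgord ▸ IsPrimitiveRoot.orderOf g
  have hζu : IsPrimitiveRoot (g ^ s) d := hgprim.pow hq1pos (by rw [← hds]; ring)
  have hζF : IsPrimitiveRoot ((g : F) ^ s) d := by
    have h1 := IsPrimitiveRoot.coe_units_iff.mpr hζu
    rwa [Units.val_pow_eq_pow_val] at h1
  set μ : Finset F := Polynomial.nthRootsFinset d (1 : F) with hμ_def
  have hμcard : μ.card = d := hζF.card_nthRootsFinset
  have hμmem : ∀ x : F, x ∈ μ ↔ x ^ d = 1 := fun x => Polynomial.mem_nthRootsFinset hdpos (1 : F)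
  have hmu0 : ∀ γ ∈ μ, γ ≠ 0 := by
    intro γ hγ h0
    rw [hμmem, h0, zero_pow hd0] at hγ
    exact zero_ne_one hγ
  have hμneg : ∀ γ ∈ μ, -γ ∈ μ := by
    intro γ hγ
    rw [hμmem] at hγ ⊢
    rw [hdeven.neg_pow, hγ]
  have hμnn : ∀ γ ∈ μ, -γ ≠ γ := by
    intro γ hγ heqq
    have h2γ : (2 : F) * γ = 0 := by linear_combination -heqq
    rcases mul_eq_zero.mp h2γ with hh | hh
    · exact h2F hh
    · exact hmu0 γ hγ hh
  have hpow1 : ∀ x : F, x ≠ 0 → x ^ (q - 1) = 1 := by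
    intro x hx
    rw [← hq]
    exact FiniteField.pow_card_sub_one_eq_one x hx
  have hmuS : ∀ x : F, x ≠ 0 → x ^ s ∈ μ := by
    intro x hx
    rw [hμmem, ← pow_mul]
    have hsd : s * d = q - 1 := by rw [← hds]; ring
    rw [hsd]
    exact hpow1 x hx
  have hb : ∀ γ ∈ μ, h.eval γ ≠ 0 := by
    intro γ hγ h0
    haveI : NeZero d := ⟨hd0⟩
    obtain ⟨i, hilt, hi⟩ := hζF.eq_pow_of_pow_eq_one ((hμmem γ).mp hγ)
    have hx0 : ((g : F) ^ i) ≠ 0 := pow_ne_zero _ (Units.ne_zero g)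
    have hxs : ((g : F) ^ i) ^ s = γ := by
      rw [← pow_mul, mul_comm, pow_mul, hi]
    have hfx : f ((g : F) ^ i) = f 0 := by
      rw [hf, hf, hxs, h0]
      simp
    exact hx0 (hperm.injective hfx)
  -- the tagging function
  set tag : F → F × F := fun x =>
    if x = 0 then ((x + a) ^ s, -((x + a) ^ s))
    else if x + a = 0 ∨ (x + a) ^ s = x ^ s ∨ (x + a) ^ s = -(x ^ s) then (x ^ s, -(x ^ s))
    else (x ^ s, (x + a) ^ s) with htag_def
  have hSmem : ∀ x : F, x ∈ S ↔ f (x + a) - f x = c := by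
    intro x
    rw [hS_def, Finset.mem_filter]
    simp
  have heq : ∀ x ∈ S, h.eval ((x + a) ^ s) * (x + a) ^ 2 - h.eval (x ^ s) * x ^ 2 = c := by
    intro x hx
    rw [hSmem] at hx
    rw [hf, hf] at hx
    linear_combination hx
  -- tag analysis for non-anti pairs
  have htag3 : ∀ x α β : F, tag x = (α, β) → β ≠ -α →
      x ≠ 0 ∧ x + a ≠ 0 ∧ x ^ s = α ∧ (x + a) ^ s = β := by
    intro x α β htx hβ
    rw [htag_def] at htx
    dsimp only at htx
    split_ifs at htx with h1 h2
    · exfalso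
      rw [Prod.mk.injEq] at htx
      exact hβ (by rw [← htx.1, ← htx.2])
    · exfalso
      rw [Prod.mk.injEq] at htx
      exact hβ (by rw [← htx.1, ← htx.2])
    · push_neg at h2
      rw [Prod.mk.injEq] at htx
      exact ⟨h1, h2.1, htx.1, htx.2⟩
  -- analysis of elements in the "D" (diagonal/special) fibers
  have hDelem : ∀ β x : F, x ∈ S → tag x = (β, -β) →
      (x = 0 ∨ x + a = 0 ∨ (x + a) ^ s = x ^ s) →
      (x = 0 ∧ β = a ^ s ∧ c = a ^ 2 * h.eval β) ∨
      (x = -a ∧ β = -(a ^ s) ∧ c = -(a ^ 2 * h.eval β)) ∨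
      (x ≠ 0 ∧ x + a ≠ 0 ∧ x ^ s = β ∧ (x + a) ^ s = β ∧
        (2 * a * h.eval β) * x = c - a ^ 2 * h.eval β) := by
    intro β x hxS htx hdisj
    have hceq := heq x hxS
    rw [htag_def] at htx
    dsimp only at htx
    by_cases h0 : x = 0
    · left
      subst h0
      rw [if_pos rfl] at htx
      rw [Prod.mk.injEq] at htx
      have hβa : β = a ^ s := by rw [← htx.1, zero_add]
      refine ⟨rfl, hβa, ?_⟩
      rw [zero_add] at hceq
      rw [hβa]
      have h0s : (0 : F) ^ s = 0 := zero_pow hs0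
      rw [h0s] at hceq
      linear_combination -hceq
    · rw [if_neg h0] at htx
      by_cases ha0 : x + a = 0
      · right; left
        have hxa : x = -a := by linear_combination ha0
        rw [if_pos (Or.inl ha0)] at htx
        rw [Prod.mk.injEq] at htx
        have hxsβ : x ^ s = β := htx.1
        have hβa : β = -(a ^ s) := by
          rw [← hxsβ, hxa, hsodd.neg_pow]
        refine ⟨hxa, hβa, ?_⟩
        rw [ha0] at hceq
        have h0s : (0 : F) ^ s = 0 := zero_pow hs0
        rw [h0s] at hceq
        rw [hxa] at hceq
        have hnas : (-a : F) ^ s = β := by rw [hxa] at hxsβ; exact hxsβ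
        rw [hnas] at hceq
        linear_combination -hceq
      · right; right
        have hdg : (x + a) ^ s = x ^ s := by
          rcases hdisj with hh | hh | hh
          · exact absurd hh h0
          · exact absurd hh ha0
          · exact hh
        rw [if_pos (Or.inr (Or.inl hdg))] at htx
        rw [Prod.mk.injEq] at htx
        have hxsβ : x ^ s = β := htx.1
        refine ⟨h0, ha0, hxsβ, by rw [hdg, hxsβ], ?_⟩
        rw [hdg, hxsβ] at hceq
        linear_combination hceq
  -- anti fibers satisfy a quadratic: at most 2 elements
  have hAcard : ∀ β ∈ μ,
      (S.filter (fun x => x ≠ 0 ∧ x + a ≠ 0 ∧ x ^ s = β ∧ (x + a) ^ s = -β)).card ≤ 2 := by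
    intro β hβ
    apply wl_quad_card (h.eval (-β) - h.eval β) (2 * a * h.eval (-β)) (a ^ 2 * h.eval (-β) - c)
      (Or.inr (mul_ne_zero (mul_ne_zero h2F ha) (hb _ (hμneg β hβ))))
    intro x hx
    rw [Finset.mem_filter] at hx
    obtain ⟨hxS, hx0, hxa0, hxs, hxas⟩ := hx
    have h1 := heq x hxS
    rw [hxs, hxas] at h1
    linear_combination h1
  -- D fibers have at most 1 element
  have hDcard : ∀ β ∈ μ,
      (S.filter (fun x => tag x = (β, -β) ∧ (x = 0 ∨ x + a = 0 ∨ (x + a) ^ s = x ^ s))).card ≤ 1 := by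
    intro β hβ
    apply Finset.card_le_one.mpr
    intro x hx y hy
    rw [Finset.mem_filter] at hx hy
    have hbx := hb β hβ
    have hEx := hDelem β x hx.1 hx.2.1 hx.2.2
    have hEy := hDelem β y hy.1 hy.2.1 hy.2.2
    have has0 : a ^ s ≠ 0 := pow_ne_zero _ ha
    have h2ab : 2 * a * h.eval β ≠ 0 := mul_ne_zero (mul_ne_zero h2F ha) hbx
    rcases hEx with ⟨hx1, hx2, hx3⟩ | ⟨hx1, hx2, hx3⟩ | ⟨hx1, hx2, hx3, hx4, hx5⟩ <;>
      rcases hEy with ⟨hy1, hy2, hy3⟩ | ⟨hy1, hy2, hy3⟩ | ⟨hy1, hy2, hy3, hy4, hy5⟩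
    · rw [hx1, hy1]
    · exfalso
      rw [hx2] at hy2
      have h2as : (2:F) * a ^ s = 0 := by linear_combination hy2
      rcases mul_eq_zero.mp h2as with hh | hh
      · exact h2F hh
      · exact has0 hh
    · exfalso
      apply hy1
      have : (2 * a * h.eval β) * y = 0 := by linear_combination hy5 + hx3
      exact (mul_eq_zero.mp this).resolve_left h2ab
    · exfalso
      rw [hy2] at hx2
      have h2as : (2:F) * a ^ s = 0 := by linear_combination hx2
      rcases mul_eq_zero.mp h2as with hh | hh
      · exact h2F hh
      · exact has0 hh
    · rw [hx1, hy1]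
    · exfalso
      apply hy2
      have : (2 * a * h.eval β) * (y + a) = 0 := by linear_combination hy5 + hx3
      exact (mul_eq_zero.mp this).resolve_left h2ab
    · exfalso
      apply hx1
      have : (2 * a * h.eval β) * x = 0 := by linear_combination hx5 + hy3
      exact (mul_eq_zero.mp this).resolve_left h2ab
    · exfalso
      apply hx2
      have : (2 * a * h.eval β) * (x + a) = 0 := by linear_combination hx5 + hy3
      exact (mul_eq_zero.mp this).resolve_left h2ab
    · have : (2 * a * h.eval β) * x = (2 * a * h.eval β) * y := by rw [hx5, hy5]
      exact mul_left_cancel₀ h2ab this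
  -- fibers over (β, -β) decompose into anti and D parts
  have hMsub : ∀ β : F,
      S.filter (fun x => tag x = (β, -β)) ⊆
      (S.filter (fun x => x ≠ 0 ∧ x + a ≠ 0 ∧ x ^ s = β ∧ (x + a) ^ s = -β)) ∪
      (S.filter (fun x => tag x = (β, -β) ∧ (x = 0 ∨ x + a = 0 ∨ (x + a) ^ s = x ^ s))) := by
    intro β x hx
    rw [Finset.mem_filter] at hx
    obtain ⟨hxS, htx⟩ := hx
    by_cases hD : x = 0 ∨ x + a = 0 ∨ (x + a) ^ s = x ^ s
    · exact Finset.mem_union_right _ (Finset.mem_filter.mpr ⟨hxS, htx, hD⟩)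
    · push_neg at hD
      obtain ⟨h0, ha0, hdg⟩ := hD
      apply Finset.mem_union_left
      rw [Finset.mem_filter]
      rw [htag_def] at htx
      dsimp only at htx
      rw [if_neg h0] at htx
      by_cases hanti : (x + a) ^ s = -(x ^ s)
      · rw [if_pos (Or.inr (Or.inr hanti))] at htx
        rw [Prod.mk.injEq] at htx
        refine ⟨hxS, h0, ha0, htx.1, ?_⟩
        rw [← htx.1, hanti]
      · rw [if_neg (by tauto)] at htx
        rw [Prod.mk.injEq] at htx
        exfalso
        exact hanti (by rw [htx.1, htx.2])
  -- the pairing bound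
  have hpair : ∀ α ∈ μ,
      (S.filter (fun x => tag x = (α, -α))).card +
      (S.filter (fun x => tag x = (-α, -(-α)))).card ≤ 5 := by
    intro α hα
    have hα' : -α ∈ μ := hμneg α hα
    have hA1 := hAcard α hα
    have hA2 := hAcard (-α) hα'
    have hD1 := hDcard α hα
    have hD2 := hDcard (-α) hα'
    have hG1 : (S.filter (fun x => tag x = (α, -α))).card ≤
        (S.filter (fun x => x ≠ 0 ∧ x + a ≠ 0 ∧ x ^ s = α ∧ (x + a) ^ s = -α)).card +
        (S.filter (fun x => tag x = (α, -α) ∧ (x = 0 ∨ x + a = 0 ∨ (x + a) ^ s = x ^ s))).card :=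
      le_trans (Finset.card_le_card (hMsub α)) (Finset.card_union_le _ _)
    have hG2 : (S.filter (fun x => tag x = (-α, -(-α)))).card ≤
        (S.filter (fun x => x ≠ 0 ∧ x + a ≠ 0 ∧ x ^ s = -α ∧ (x + a) ^ s = -(-α))).card +
        (S.filter (fun x => tag x = (-α, -(-α)) ∧ (x = 0 ∨ x + a = 0 ∨ (x + a) ^ s = x ^ s))).card :=
      le_trans (Finset.card_le_card (hMsub (-α))) (Finset.card_union_le _ _)
    by_cases hcase : 2 ≤ (S.filter (fun x => x ≠ 0 ∧ x + a ≠ 0 ∧ x ^ s = α ∧ (x + a) ^ s = -α)).card ∧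
        2 ≤ (S.filter (fun x => x ≠ 0 ∧ x + a ≠ 0 ∧ x ^ s = -α ∧ (x + a) ^ s = -(-α))).card
    · obtain ⟨x₁, hx₁, x₂, hx₂, hx12⟩ := Finset.one_lt_card.mp hcase.1
      obtain ⟨y₁, hy₁, y₂, hy₂, hy12⟩ := Finset.one_lt_card.mp hcase.2
      rw [Finset.mem_filter] at hx₁ hx₂ hy₁ hy₂
      obtain ⟨hx₁S, hx₁10, hx₁1a, hx₁1s, hx₁1as⟩ := hx₁
      obtain ⟨hx₂S, hx₂20, hx₂2a, hx₂2s, hx₂2as⟩ := hx₂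
      obtain ⟨hy₁S, hy₁10, hy₁1a, hy₁1s, hy₁1as'⟩ := hy₁
      obtain ⟨hy₂S, hy₂20, hy₂2a, hy₂2s, hy₂2as'⟩ := hy₂
      rw [neg_neg] at hy₁1as' hy₂2as'
      have e1 := heq x₁ hx₁S
      rw [hx₁1s, hx₁1as] at e1
      have e2 := heq x₂ hx₂S
      rw [hx₂2s, hx₂2as] at e2
      have e3 := heq y₁ hy₁S
      rw [hy₁1s, hy₁1as'] at e3
      have e4 := heq y₂ hy₂S
      rw [hy₂2s, hy₂2as'] at e4
      obtain ⟨k1, k2, k3, k4, hK⟩ := wl_anti22 s hsodd h2F a c α (h.eval α) (h.eval (-α))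
        ha (hmu0 α hα) (hb (-α) hα') x₁ x₂ y₁ y₂ hx12 hy12
        hx₁1s hx₂2s hx₁1as hx₂2as hy₁1s hy₂2s hy₁1as' hy₂2as'
        (by linear_combination e1) (by linear_combination e2)
        (by linear_combination e3) (by linear_combination e4)
      have h0s : (0 : F) ^ s = 0 := zero_pow hs0
      have hD1e : (S.filter (fun x => tag x = (α, -α) ∧
          (x = 0 ∨ x + a = 0 ∨ (x + a) ^ s = x ^ s))).card = 0 := by
        rw [Finset.card_eq_zero, Finset.filter_eq_empty_iff]
        rintro x hxS ⟨htx, hdisj⟩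
        rcases hDelem α x hxS htx hdisj with
          ⟨_, _, hc⟩ | ⟨_, _, hc⟩ | ⟨_, _, hxs, hxas, hlin⟩
        · apply hK
          have hz : a ^ 2 * h.eval α - c = 0 := by rw [hc]; ring
          rw [hz, h0s] at k4
          linear_combination k4
        · apply hK
          have hz : a ^ 2 * h.eval α + c = 0 := by rw [hc]; ring
          rw [hz, h0s] at k3
          linear_combination k3
        · apply hK
          have hlin2 : (2 * a * h.eval α) * (x + a) = a ^ 2 * h.eval α + c := by
            linear_combination hlin
          have p1 : (c - a ^ 2 * h.eval α) ^ s = (2 * a * h.eval α) ^ s * α := by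
            rw [← hlin, mul_pow, hxs]
          have p2 : (a ^ 2 * h.eval α + c) ^ s = (2 * a * h.eval α) ^ s * α := by
            rw [← hlin2, mul_pow, hxas]
          have hq1 : (c - a ^ 2 * h.eval α) ^ s =
              -((a ^ 2 * h.eval α - c) ^ s) := by
            rw [show c - a ^ 2 * h.eval α = -(a ^ 2 * h.eval α - c) by ring, hsodd.neg_pow]
          rw [hq1, k4] at p1
          rw [k3] at p2
          have : (2:F) * ((h.eval (-α) - h.eval α) ^ s * α ^ 2) = 0 := by
            linear_combination p1 - p2
          rcases mul_eq_zero.mp this with hh | hh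
          · exact absurd hh h2F
          · exact hh
      have hD2e : (S.filter (fun x => tag x = (-α, -(-α)) ∧
          (x = 0 ∨ x + a = 0 ∨ (x + a) ^ s = x ^ s))).card = 0 := by
        rw [Finset.card_eq_zero, Finset.filter_eq_empty_iff]
        rintro x hxS ⟨htx, hdisj⟩
        rcases hDelem (-α) x hxS htx hdisj with
          ⟨_, _, hc⟩ | ⟨_, _, hc⟩ | ⟨_, _, hxs, hxas, hlin⟩
        · apply hK
          have hz : a ^ 2 * h.eval (-α) - c = 0 := by rw [hc]; ring
          rw [hz, h0s] at k1
          linear_combination -k1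
        · apply hK
          have hz : a ^ 2 * h.eval (-α) + c = 0 := by rw [hc]; ring
          rw [hz, h0s] at k2
          linear_combination -k2
        · apply hK
          have hlin2 : (2 * a * h.eval (-α)) * (x + a) = a ^ 2 * h.eval (-α) + c := by
            linear_combination hlin
          have p1 : (c - a ^ 2 * h.eval (-α)) ^ s = (2 * a * h.eval (-α)) ^ s * -α := by
            rw [← hlin, mul_pow, hxs]
          have p2 : (a ^ 2 * h.eval (-α) + c) ^ s = (2 * a * h.eval (-α)) ^ s * -α := by
            rw [← hlin2, mul_pow, hxas]
          have hq1 : (c - a ^ 2 * h.eval (-α)) ^ s =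
              -((a ^ 2 * h.eval (-α) - c) ^ s) := by
            rw [show c - a ^ 2 * h.eval (-α) = -(a ^ 2 * h.eval (-α) - c) by ring, hsodd.neg_pow]
          rw [hq1, k1] at p1
          rw [k2] at p2
          have : (2:F) * ((h.eval (-α) - h.eval α) ^ s * α ^ 2) = 0 := by
            linear_combination p2 - p1
          rcases mul_eq_zero.mp this with hh | hh
          · exact absurd hh h2F
          · exact hh
      omega
    · push_neg at hcase
      by_cases hc1 : 2 ≤ (S.filter (fun x => x ≠ 0 ∧ x + a ≠ 0 ∧ x ^ s = α ∧ (x + a) ^ s = -α)).card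
      · have := hcase hc1
        omega
      · omega
  -- global assembly
  set P1 : Finset (F × F) := μ.image (fun γ => (γ, -γ)) with hP1_def
  set P2 : Finset (F × F) := (μ ×ˢ μ).filter (fun p => p.2 ≠ p.1 ∧ p.2 ≠ -p.1) with hP2_def
  have htagmem : ∀ x ∈ S, tag x ∈ P1 ∪ P2 := by
    intro x hxS
    rw [htag_def]
    dsimp only
    by_cases h0 : x = 0
    · rw [if_pos h0]
      apply Finset.mem_union_left
      rw [hP1_def]
      apply Finset.mem_image.mpr
      refine ⟨(x + a) ^ s, hmuS _ (by rw [h0, zero_add]; exact ha), rfl⟩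
    · rw [if_neg h0]
      by_cases h2 : x + a = 0 ∨ (x + a) ^ s = x ^ s ∨ (x + a) ^ s = -(x ^ s)
      · rw [if_pos h2]
        apply Finset.mem_union_left
        rw [hP1_def]
        exact Finset.mem_image.mpr ⟨x ^ s, hmuS x h0, rfl⟩
      · rw [if_neg h2]
        push_neg at h2
        apply Finset.mem_union_right
        rw [hP2_def, Finset.mem_filter, Finset.mem_product]
        exact ⟨⟨hmuS x h0, hmuS _ h2.1⟩, h2.2.1, h2.2.2⟩
  have hdisjP : Disjoint P1 P2 := by
    rw [Finset.disjoint_left]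
    intro p hp1 hp2
    rw [hP1_def] at hp1
    rw [hP2_def, Finset.mem_filter] at hp2
    obtain ⟨γ, hγ, hp⟩ := Finset.mem_image.mp hp1
    apply hp2.2.2
    rw [← hp]
  have hcount : S.card = ∑ t ∈ P1 ∪ P2, (S.filter (fun x => tag x = t)).card :=
    Finset.card_eq_sum_card_fiberwise htagmem
  rw [Finset.sum_union hdisjP] at hcount
  -- P2 part
  have hP2each : ∀ t ∈ P2, (S.filter (fun x => tag x = t)).card ≤ 2 := by
    rintro ⟨α, β⟩ ht
    rw [hP2_def, Finset.mem_filter, Finset.mem_product] at ht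
    obtain ⟨⟨hαμ, hβμ⟩, hne1, hne2⟩ := ht
    apply wl_quad_card (h.eval β - h.eval α) (2 * a * h.eval β) (a ^ 2 * h.eval β - c)
      (Or.inr (mul_ne_zero (mul_ne_zero h2F ha) (hb β hβμ)))
    intro x hx
    rw [Finset.mem_filter] at hx
    obtain ⟨hxS, htx⟩ := hx
    obtain ⟨h0, ha0, hxs, hxas⟩ := htag3 x α β htx hne2
    have h1 := heq x hxS
    rw [hxs, hxas] at h1
    linear_combination h1
  have hP2card : P2.card ≤ d * (d - 2) := by
    have hsub : P2 ⊆ μ.biUnion (fun α => ((μ.erase α).erase (-α)).image (fun β => (α, β))) := by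
      rintro ⟨α, β⟩ hp
      rw [hP2_def, Finset.mem_filter, Finset.mem_product] at hp
      obtain ⟨⟨hαμ, hβμ⟩, hne1, hne2⟩ := hp
      rw [Finset.mem_biUnion]
      refine ⟨α, hαμ, Finset.mem_image.mpr ⟨β, ?_, rfl⟩⟩
      rw [Finset.mem_erase, Finset.mem_erase]
      exact ⟨hne2, hne1, hβμ⟩
    calc P2.card ≤ (μ.biUnion (fun α => ((μ.erase α).erase (-α)).image (fun β => (α, β)))).card :=
          Finset.card_le_card hsub
      _ ≤ ∑ α ∈ μ, (((μ.erase α).erase (-α)).image (fun β => (α, β))).card :=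
          Finset.card_biUnion_le
      _ ≤ ∑ α ∈ μ, (d - 2) := by
          apply Finset.sum_le_sum
          intro α hα
          refine le_trans Finset.card_image_le ?_
          rw [Finset.card_erase_of_mem, Finset.card_erase_of_mem hα, hμcard]
          · omega
          · rw [Finset.mem_erase]
            exact ⟨hμnn α hα, hμneg α hα⟩
      _ = d * (d - 2) := by rw [Finset.sum_const, hμcard, smul_eq_mul]
  have hP2sum : ∑ t ∈ P2, (S.filter (fun x => tag x = t)).card ≤ 2 * (d * (d - 2)) := by
    calc ∑ t ∈ P2, (S.filter (fun x => tag x = t)).card ≤ ∑ t ∈ P2, 2 :=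
        Finset.sum_le_sum hP2each
      _ = P2.card * 2 := by rw [Finset.sum_const, smul_eq_mul]
      _ ≤ (d * (d - 2)) * 2 := Nat.mul_le_mul_right 2 hP2card
      _ = 2 * (d * (d - 2)) := by ring
  -- P1 part
  have hP1sum : ∑ t ∈ P1, (S.filter (fun x => tag x = t)).card =
      ∑ γ ∈ μ, (S.filter (fun x => tag x = (γ, -γ))).card := by
    rw [hP1_def]
    apply Finset.sum_image
    intro γ₁ h₁ γ₂ h₂ heqq
    exact (Prod.mk.injEq _ _ _ _ ▸ heqq : _ ∧ _).1
  have hre : ∑ γ ∈ μ, (S.filter (fun x => tag x = (-γ, -(-γ)))).card =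
      ∑ γ ∈ μ, (S.filter (fun x => tag x = (γ, -γ))).card := by
    apply Finset.sum_nbij' (fun γ => -γ) (fun γ => -γ)
    · intro γ hγ; exact hμneg γ hγ
    · intro γ hγ; exact hμneg γ hγ
    · intro γ hγ; rw [neg_neg]
    · intro γ hγ; rw [neg_neg]
    · intro γ hγ; rfl
  have hGsum : ∑ γ ∈ μ, (S.filter (fun x => tag x = (γ, -γ))).card +
      ∑ γ ∈ μ, (S.filter (fun x => tag x = (γ, -γ))).card ≤ 5 * d := by
    nth_rewrite 2 [← hre]
    rw [← Finset.sum_add_distrib]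
    calc ∑ γ ∈ μ, ((S.filter (fun x => tag x = (γ, -γ))).card +
          (S.filter (fun x => tag x = (-γ, -(-γ)))).card) ≤ ∑ γ ∈ μ, 5 :=
        Finset.sum_le_sum hpair
      _ = μ.card * 5 := by rw [Finset.sum_const, smul_eq_mul]
      _ = 5 * d := by rw [hμcard]; ring
  -- final arithmetic
  obtain ⟨e, he⟩ := hdeven
  have he1 : 1 ≤ e := by omega
  have hP1bound : ∑ t ∈ P1, (S.filter (fun x => tag x = t)).card ≤ 5 * e := by
    rw [hP1sum]; omega
  set X : ℕ := d * (d - 2) with hX_def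
  set m : ℕ := e * e with hm_def
  have hXm : X + 4 * e = 4 * m := by
    rw [hX_def, hm_def, he]
    obtain ⟨t, rfl⟩ : ∃ t, e = t + 1 := ⟨e - 1, by omega⟩
    have h22 : t + 1 + (t + 1) - 2 = 2 * t := by omega
    rw [h22]; ring
  have hgoal_eq : 2 * d ^ 2 - 3 * d / 2 = 8 * m - 3 * e := by
    rw [hm_def, he]
    have h1 : 2 * (e + e) ^ 2 = 8 * (e * e) := by ring
    have h2 : 3 * (e + e) / 2 = 3 * e := by omega
    rw [h1, h2]
  rw [hgoal_eq]
  omega
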